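/- Let d ≥ 2 and S = (V,H) be a paving simplicial complex of dimension d. Then S is a truncated boolean representable simplicial complex if and only if H = ∪_{L ∈ 𝓛} B_d(V,L) for some nonempty family 𝓛 of subsets L of V with d ≤ |L| < |V|, where B_d(V,L) = P_{≤d}(V) ∪ {X ∈ P_{d+1}(V) : |X ∩ L| = d}. -/

import Mathlib

open scoped Classical

variable {V : Type*}

/-- A (finite) simplicial complex on vertex set `V`: all singletons are faces and
faces are closed under taking subsets. -/
def IsSimplicialComplex [DecidableEq V] (H : Set (Finset V)) : Prop :=
  (∀ v : V, {v} ∈ H) ∧ ∀ X ∈ H, ∀ Y ⊆ X, Y ∈ H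

/-- `F` is a flat of the complex with faces `H`. -/
def IsFlat [DecidableEq V] (H : Set (Finset V)) (F : Finset V) : Prop :=
  ∀ I ∈ H, I ⊆ F → ∀ p ∉ F, insert p I ∈ H

/-- `X` is a facet (maximal face) of `H`. -/
def IsFacet (H : Set (Finset V)) (X : Finset V) : Prop :=
  X ∈ H ∧ ∀ Y ∈ H, X ⊆ Y → Y = X

/-- The `k`-truncation of the family of faces `H`. -/
def trunc (H : Set (Finset V)) (k : ℕ) : Set (Finset V) :=
  {X ∈ H | X.card ≤ k}

/-- `H` has dimension `d`: some face has `d+1` elements and all faces have at most `d+1`. -/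
def HasDim (H : Set (Finset V)) (d : ℕ) : Prop :=
  (∃ X ∈ H, X.card = d + 1) ∧ ∀ X ∈ H, X.card ≤ d + 1

/-- `H` is paving of dimension `d`: every `d`-subset is a face and the maximal face
cardinality is `d+1`. -/
def PavingDim (H : Set (Finset V)) (d : ℕ) : Prop :=
  (∀ X : Finset V, X.card = d → X ∈ H) ∧ (∃ X ∈ H, X.card = d + 1) ∧
    ∀ X ∈ H, X.card ≤ d + 1

/-- `X` is a transversal of the successive differences for a chain
`C 0 ⊆ C 1 ⊆ … ⊆ C k` in the family `F`, i.e. `X` enumerates as `x 0, …, x (k-1)`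
with `x i ∈ C (i+1) \ C i`. -/
def Transversal [DecidableEq V] (F : Set (Finset V)) (X : Finset V) : Prop :=
  ∃ (k : ℕ) (x : Fin k → V) (C : Fin (k + 1) → Finset V),
    Function.Injective x ∧
    X = Finset.image x Finset.univ ∧
    (∀ i, C i ∈ F) ∧
    (∀ i : Fin k, C i.castSucc ⊆ C i.succ) ∧
    (∀ i : Fin k, x i ∈ C i.succ ∧ x i ∉ C i.castSucc)

/-- The set of all transversals of the successive differences for chains in `F`. -/
def Tr [DecidableEq V] (F : Set (Finset V)) : Set (Finset V) :=
  {X | Transversal F X}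

/-- `H` is boolean representable: its faces are exactly the transversals of the
successive differences for chains in its lattice of flats. -/
def BooleanRepresentable [DecidableEq V] (H : Set (Finset V)) : Prop :=
  H = Tr {F | IsFlat H F}

/-- The family `ε(S)` for a complex of dimension `d`. -/
def eps [DecidableEq V] (H : Set (Finset V)) (d : ℕ) : Set (Finset V) :=
  {X | ∀ Y ∈ H, Y ⊆ X → Y.card ≤ d → ∀ p ∉ X, insert p Y ∈ H}

/-- `H` is a truncated boolean representable simplicial complex. -/
def IsTBRSC [DecidableEq V] (H : Set (Finset V)) : Prop :=
  ∃ (H' : Set (Finset V)) (k : ℕ), 1 ≤ k ∧ IsSimplicialComplex H' ∧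
    BooleanRepresentable H' ∧ H = trunc H' k

/-- The complex `B_d(V,L)`. -/
def Bd [DecidableEq V] (d : ℕ) (L : Finset V) : Set (Finset V) :=
  {X | X.card ≤ d} ∪ {X | X.card = d + 1 ∧ (X ∩ L).card = d}

/-- The closure of `X`: the intersection of all flats containing `X`. -/
noncomputable def cl [Fintype V] [DecidableEq V] (H : Set (Finset V)) (X : Finset V) :
    Finset V :=
  Finset.univ.filter fun v => ∀ F : Finset V, IsFlat H F → X ⊆ F → v ∈ F

/-- `H` is a near-matroid. -/
def NearMatroid [Fintype V] [DecidableEq V] (H : Set (Finset V)) : Prop :=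
  ∀ X ∈ H, ∀ Y ∈ H, cl H X = cl H Y → cl H X ≠ Finset.univ → X.card = Y.card

/-- `H` is a matroid: a simplicial complex with the exchange property. -/
def IsMatroid [DecidableEq V] (H : Set (Finset V)) : Prop :=
  IsSimplicialComplex H ∧
    ∀ I ∈ H, ∀ J ∈ H, I.card = J.card + 1 → ∃ i ∈ I, i ∉ J ∧ insert i J ∈ H

section Aux
variable [DecidableEq V]

inductive TrAux (F : Set (Finset V)) : Finset V → Finset V → Prop where
  | base (T : Finset V) (hT : T ∈ F) : TrAux F ∅ T
  | step {X T T' : Finset V} {p : V} (h : TrAux F X T) (hT' : T' ∈ F) (hTT : T ⊆ T')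
      (hp : p ∈ T') (hpT : p ∉ T) : TrAux F (insert p X) T'

lemma trAux_subset {F : Set (Finset V)} {X T : Finset V} (h : TrAux F X T) : X ⊆ T := by
  induction h with
  | base T hT => simp
  | step h hT' hTT hp hpT ih =>
    exact Finset.insert_subset hp (ih.trans hTT)

lemma trAux_memF {F : Set (Finset V)} {X T : Finset V} (h : TrAux F X T) : T ∈ F := by
  cases h with
  | base T hT => exact hT
  | step h hT' hTT hp hpT => exact hT'

lemma trAux_mono {F F' : Set (Finset V)} (hFF : F ⊆ F') {X T : Finset V}
    (h : TrAux F X T) : TrAux F' X T := by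
  induction h with
  | base T hT => exact .base T (hFF hT)
  | step h hT' hTT hp hpT ih => exact .step ih (hFF hT') hTT hp hpT

lemma trAux_of_chain {F : Set (Finset V)} :
    ∀ (k : ℕ) (x : Fin k → V) (C : Fin (k + 1) → Finset V),
      Function.Injective x →
      (∀ i, C i ∈ F) →
      (∀ i : Fin k, C i.castSucc ⊆ C i.succ) →
      (∀ i : Fin k, x i ∈ C i.succ ∧ x i ∉ C i.castSucc) →
      TrAux F (Finset.image x Finset.univ) (C (Fin.last k)) := by
  intro k
  induction k with
  | zero =>
    intro x C _ hC _ _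
    simpa using TrAux.base (C (Fin.last 0)) (hC _)
  | succ k ih =>
    intro x C hinj hC hchain hx
    have h1 := ih (x ∘ Fin.castSucc) (C ∘ Fin.castSucc)
      (hinj.comp (Fin.castSucc_injective k))
      (fun i => hC _)
      (fun i => by
        have := hchain i.castSucc
        simpa only [Function.comp_apply, Fin.succ_castSucc] using this)
      (fun i => by
        have := hx i.castSucc
        simpa only [Function.comp_apply, Fin.succ_castSucc] using this)
    have himg : Finset.image x Finset.univ =
        insert (x (Fin.last k)) (Finset.image (x ∘ Fin.castSucc) Finset.univ) := by
      ext a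
      simp only [Finset.mem_image, Finset.mem_univ, true_and, Finset.mem_insert,
        Function.comp_apply, Fin.exists_fin_succ']
      tauto
    have hlast := hx (Fin.last k)
    have hchl := hchain (Fin.last k)
    have hres : TrAux F (insert (x (Fin.last k)) (Finset.image (x ∘ Fin.castSucc) Finset.univ))
        (C (Fin.last (k + 1))) := by
      refine TrAux.step h1 (hC _) ?_ ?_ ?_
      · simpa [Function.comp, Fin.succ_last] using hchl
      · simpa [Fin.succ_last] using hlast.1
      · simpa [Function.comp] using hlast.2
    rw [himg]
    exact hres

lemma snoc_injective {k : ℕ} {x : Fin k → V} {p : V} (hinj : Function.Injective x)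
    (hp : ∀ i, x i ≠ p) : Function.Injective (Fin.snoc x p : Fin (k + 1) → V) := by
  intro a b hab
  induction a using Fin.lastCases with
  | last =>
    induction b using Fin.lastCases with
    | last => rfl
    | cast j => simp [Fin.snoc_last, Fin.snoc_castSucc] at hab; exact absurd hab.symm (hp j)
  | cast i =>
    induction b using Fin.lastCases with
    | last => simp [Fin.snoc_last, Fin.snoc_castSucc] at hab; exact absurd hab (hp i)
    | cast j =>
      simp only [Fin.snoc_castSucc] at hab
      exact congrArg Fin.castSucc (hinj hab)

lemma chain_of_trAux {F : Set (Finset V)} {X T : Finset V} (h : TrAux F X T) :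
    ∃ (k : ℕ) (x : Fin k → V) (C : Fin (k + 1) → Finset V),
      Function.Injective x ∧
      X = Finset.image x Finset.univ ∧
      (∀ i, C i ∈ F) ∧
      (∀ i : Fin k, C i.castSucc ⊆ C i.succ) ∧
      (∀ i : Fin k, x i ∈ C i.succ ∧ x i ∉ C i.castSucc) ∧
      C (Fin.last k) = T := by
  induction h with
  | base T hT =>
    exact ⟨0, Fin.elim0, fun _ => T, Function.injective_of_subsingleton _, by simp,
      fun _ => hT, fun i => i.elim0, fun i => i.elim0, rfl⟩
  | @step X T T' p h hT' hTT hpmem hpT ih =>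
    obtain ⟨k, x, C, hinj, hX, hC, hchain, hx, hCl⟩ := ih
    have hpX : p ∉ X := fun hm => hpT (trAux_subset h hm)
    refine ⟨k + 1, Fin.snoc x p, Fin.snoc C T', ?_, ?_, ?_, ?_, ?_, ?_⟩
    · refine snoc_injective hinj fun i hi => ?_
      exact hpX (by rw [hX]; exact Finset.mem_image.2 ⟨i, Finset.mem_univ i, hi⟩)
    · rw [hX]
      ext a
      simp only [Finset.mem_image, Finset.mem_univ, true_and, Finset.mem_insert,
        Fin.exists_fin_succ', Fin.snoc_castSucc, Fin.snoc_last]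
      tauto
    · intro i
      induction i using Fin.lastCases with
      | last => simpa [Fin.snoc_last] using hT'
      | cast j => simpa [Fin.snoc_castSucc] using hC j
    · intro i
      induction i using Fin.lastCases with
      | last =>
        rw [Fin.succ_last, Fin.snoc_last, Fin.snoc_castSucc, hCl]
        exact hTT
      | cast j =>
        rw [Fin.succ_castSucc, Fin.snoc_castSucc, Fin.snoc_castSucc]
        exact hchain j
    · intro i
      induction i using Fin.lastCases with
      | last =>
        constructor
        · rw [Fin.succ_last, Fin.snoc_last, Fin.snoc_last]; exact hpmem
        · rw [Fin.snoc_last, Fin.snoc_castSucc, hCl]; exact hpT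
      | cast j =>
        constructor
        · rw [Fin.succ_castSucc, Fin.snoc_castSucc, Fin.snoc_castSucc]; exact (hx j).1
        · rw [Fin.snoc_castSucc, Fin.snoc_castSucc]; exact (hx j).2
    · simp [Fin.snoc_last]

lemma transversal_iff_trAux {F : Set (Finset V)} {X : Finset V} :
    Transversal F X ↔ ∃ T, TrAux F X T := by
  constructor
  · rintro ⟨k, x, C, hinj, hX, hC, hchain, hx⟩
    exact ⟨C (Fin.last k), hX ▸ trAux_of_chain k x C hinj hC hchain hx⟩
  · rintro ⟨T, h⟩
    obtain ⟨k, x, C, hinj, hX, hC, hchain, hx, _⟩ := chain_of_trAux h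
    exact ⟨k, x, C, hinj, hX, hC, hchain, hx⟩

end Aux

section Aux2
variable [DecidableEq V]

lemma trAux_downward {F : Set (Finset V)} {X T : Finset V} (h : TrAux F X T) :
    ∀ Y ⊆ X, ∃ T', TrAux F Y T' ∧ T' ⊆ T := by
  induction h with
  | base T hT =>
    intro Y hY
    rw [Finset.subset_empty.mp hY]
    exact ⟨T, .base T hT, le_refl T⟩
  | @step X T T' p h hT' hTT hp hpT ih =>
    intro Y hY
    by_cases hpY : p ∈ Y
    · have hY' : Y.erase p ⊆ X := by
        intro a ha
        have h1 := Finset.mem_of_mem_erase ha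
        have h2 := Finset.ne_of_mem_erase ha
        rcases Finset.mem_insert.mp (hY h1) with h3 | h3
        · exact absurd h3 h2
        · exact h3
      obtain ⟨T'', hT'', hsub⟩ := ih _ hY'
      refine ⟨T', ?_, le_refl T'⟩
      have := TrAux.step hT'' hT' (hsub.trans hTT) hp (fun hc => hpT (hsub hc))
      rwa [Finset.insert_erase hpY] at this
    · have hY' : Y ⊆ X := by
        intro a ha
        rcases Finset.mem_insert.mp (hY ha) with h3 | h3
        · exact absurd (h3 ▸ ha) hpY
        · exact h3
      obtain ⟨T'', hT'', hsub⟩ := ih _ hY'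
      exact ⟨T'', hT'', hsub.trans hTT⟩

/-- Lemma A : transversals of chains of flats are faces. -/
lemma trAux_flats_mem {H : Set (Finset V)} (hemp : ∅ ∈ H) {X T : Finset V}
    (h : TrAux {F | IsFlat H F} X T) : X ∈ H := by
  induction h with
  | base T hT => exact hemp
  | @step X T T' p h hT' hTT hp hpT ih =>
    exact (trAux_memF h) X ih (trAux_subset h) p hpT

/-- Intersecting the chain with a member of an intersection-closed family. -/
lemma trAux_inter {F : Set (Finset V)} (hFinter : ∀ A ∈ F, ∀ B ∈ F, A ∩ B ∈ F)
    {X T G : Finset V} (hG : G ∈ F) (hXG : X ⊆ G) (h : TrAux F X T) :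
    TrAux F X (T ∩ G) := by
  induction h with
  | base T hT => exact .base _ (hFinter T hT G hG)
  | @step X T T' p h hT' hTT hp hpT ih =>
    have hXsub : X ⊆ G := fun a ha => hXG (Finset.mem_insert_of_mem ha)
    refine TrAux.step (ih hXsub) (hFinter T' hT' G hG) ?_ ?_ ?_
    · exact Finset.inter_subset_inter hTT (le_refl G)
    · exact Finset.mem_inter.mpr ⟨hp, hXG (Finset.mem_insert_self p X)⟩
    · exact fun hc => hpT (Finset.mem_inter.mp hc).1

/-- Members of an intersection-closed family containing `univ` are flats of its
transversal complex. -/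
lemma mem_flat_of_tr [Fintype V] {F : Set (Finset V)}
    (hFinter : ∀ A ∈ F, ∀ B ∈ F, A ∩ B ∈ F) (huniv : Finset.univ ∈ F)
    {G : Finset V} (hG : G ∈ F) : IsFlat (Tr F) G := by
  intro I hI hIG p hpG
  obtain ⟨T, hT⟩ := transversal_iff_trAux.mp hI
  have h1 : TrAux F I (T ∩ G) := trAux_inter hFinter hG hIG hT
  have h2 : TrAux F (insert p I) Finset.univ := by
    refine TrAux.step h1 huniv (Finset.subset_univ _) (Finset.mem_univ p) ?_
    exact fun hc => hpG (Finset.mem_inter.mp hc).2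
  exact transversal_iff_trAux.mpr ⟨_, h2⟩

lemma tr_downward {F : Set (Finset V)} {X Y : Finset V} (hX : X ∈ Tr F) (hY : Y ⊆ X) :
    Y ∈ Tr F := by
  obtain ⟨T, hT⟩ := transversal_iff_trAux.mp hX
  obtain ⟨T', hT', _⟩ := trAux_downward hT Y hY
  exact transversal_iff_trAux.mpr ⟨T', hT'⟩

lemma tr_mono {F F' : Set (Finset V)} (h : F ⊆ F') : Tr F ⊆ Tr F' := by
  intro X hX
  obtain ⟨T, hT⟩ := transversal_iff_trAux.mp hX
  exact transversal_iff_trAux.mpr ⟨T, trAux_mono h hT⟩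

/-- Key counting lemma for intersections. -/
lemma inter_card_lemma [Fintype V] {d : ℕ} {X : Finset V} (hX : X.card = d + 1) (𝓛 : Set (Finset V)) :
    ∀ K : Finset (Finset V), K.Nonempty → ↑K ⊆ 𝓛 → (X ∩ K.inf id).card = d →
      ∃ L ∈ 𝓛, (X ∩ L).card = d := by
  intro K hK
  induction hK using Finset.Nonempty.cons_induction with
  | singleton L =>
    intro hsub hcard
    refine ⟨L, hsub (Finset.mem_singleton_self L), ?_⟩
    simpa using hcard
  | cons L K' hL hK' ih =>
    intro hsub hcard
    rw [Finset.inf_cons] at hcard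
    have hsub' : ↑K' ⊆ 𝓛 := fun A hA => hsub (by simp [hA])
    have hLmem : L ∈ 𝓛 := hsub (by simp)
    have h1 : (X ∩ (L ⊓ K'.inf id)) ⊆ X ∩ L := by
      refine Finset.inter_subset_inter (le_refl X) ?_
      exact Finset.inter_subset_left
    have h2 : d ≤ (X ∩ L).card := hcard ▸ Finset.card_le_card h1
    have h3 : (X ∩ L).card ≤ d + 1 := hX ▸ Finset.card_le_card Finset.inter_subset_left
    rcases eq_or_lt_of_le h2 with heq | hlt
    · exact ⟨L, hLmem, heq.symm⟩
    · have h4 : (X ∩ L).card = d + 1 := le_antisymm h3 hlt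
      have h5 : X ⊆ L := by
        have heq : X ∩ L = X :=
          Finset.eq_of_subset_of_card_le Finset.inter_subset_left (by rw [h4, hX])
        intro a ha
        have ha2 : a ∈ X ∩ L := by rw [heq]; exact ha
        exact (Finset.mem_inter.mp ha2).2
      have h6 : X ∩ (L ⊓ K'.inf id) = X ∩ K'.inf id := by
        ext a
        simp only [Finset.mem_inter, Finset.inf_eq_inter]
        exact ⟨fun ⟨h, _, hb⟩ => ⟨h, hb⟩, fun ⟨h, hb⟩ => ⟨h, h5 h, hb⟩⟩
      exact ih hsub' (by rw [← h6]; exact hcard)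

end Aux2

section Aux3
variable [DecidableEq V]

lemma trAux_of_small {F : Set (Finset V)} {m : ℕ}
    (hsmall : ∀ Y : Finset V, Y.card ≤ m → Y ∈ F) :
    ∀ X : Finset V, X.card ≤ m → TrAux F X X := by
  intro X
  induction X using Finset.strongInduction with
  | _ X ih =>
    intro hXc
    rcases X.eq_empty_or_nonempty with rfl | ⟨q, hq⟩
    · exact .base ∅ (hsmall ∅ (by simp))
    · have h1 := ih (X.erase q) (Finset.erase_ssubset hq)
        (le_trans (Finset.card_le_card (Finset.erase_subset q X)) hXc)
      have h2 := TrAux.step h1 (hsmall X hXc) (Finset.erase_subset q X) hq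
        (Finset.notMem_erase q X)
      rwa [Finset.insert_erase hq] at h2

lemma trAux_inversion {F : Set (Finset V)} {X T : Finset V} {n : ℕ}
    (h : TrAux F X T) (hc : X.card = n + 1) :
    ∃ (T₀ : Finset V) (p : V), T₀ ∈ F ∧ p ∉ T₀ ∧ p ∈ X ∧
      X ∩ T₀ = X.erase p ∧ (X.erase p).card = n ∧ X.erase p ⊆ T₀ := by
  cases h with
  | base T hT => simp at hc
  | @step X₀ T₀ T' p h hT' hTT hpm hpT =>
    have hsub := trAux_subset h
    have hpX₀ : p ∉ X₀ := fun hc' => hpT (hsub hc')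
    have herase : (insert p X₀).erase p = X₀ := Finset.erase_insert hpX₀
    have hinter : (insert p X₀) ∩ T₀ = X₀ := by
      ext a
      simp only [Finset.mem_inter, Finset.mem_insert]
      constructor
      · rintro ⟨rfl | ha, haT⟩
        · exact absurd haT hpT
        · exact ha
      · intro ha
        exact ⟨Or.inr ha, hsub ha⟩
    have hcard : X₀.card = n := by
      rw [Finset.card_insert_of_notMem hpX₀] at hc
      omega
    exact ⟨T₀, p, trAux_memF h, hpT, Finset.mem_insert_self p X₀,
      by rw [hinter, herase], by rw [herase]; exact hcard, by rw [herase]; exact hsub⟩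

end Aux3


theorem stmt_12 [Fintype V] [DecidableEq V] [Nonempty V] (d : ℕ) (hd : 2 ≤ d)
    (H : Set (Finset V)) (hS : IsSimplicialComplex H) (hp : PavingDim H d) :
    IsTBRSC H ↔
      ∃ 𝓛 : Set (Finset V), 𝓛.Nonempty ∧
        (∀ L ∈ 𝓛, d ≤ L.card ∧ L ≠ Finset.univ) ∧
        H = {X : Finset V | ∃ L ∈ 𝓛, X ∈ Bd d L} := by
  obtain ⟨hpav, ⟨Z, hZH, hZc⟩, hdim⟩ := hp
  have hVcard : d + 1 ≤ Fintype.card V := by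
    have := Finset.card_le_univ Z
    rw [hZc] at this
    simpa using this
  have hsmallH : ∀ X : Finset V, X.card ≤ d → X ∈ H := by
    intro X hX
    obtain ⟨Y, hXY, _, hYc⟩ := Finset.exists_subsuperset_card_eq (Finset.subset_univ X) hX
      (by simpa using (by omega : d ≤ Fintype.card V))
    exact hS.2 Y (hpav Y hYc) X hXY
  constructor
  · -- forward direction
    rintro ⟨H'', k, hk1, hSC'', hBR'', hHtr⟩
    have hHsub : H ⊆ H'' := by
      rw [hHtr]; exact fun X hX => hX.1
    have hkd : d + 1 ≤ k := by
      have : Z ∈ trunc H'' k := by rw [← hHtr]; exact hZH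
      rw [← hZc]; exact this.2
    set 𝓛 : Set (Finset V) := {L | IsFlat H'' L ∧ d ≤ L.card ∧ L ≠ Finset.univ} with h𝓛
    have key : ∀ X ∈ H'', X.card = d + 1 → ∃ L ∈ 𝓛, (X ∩ L).card = d := by
      intro X hX hXc
      have hXtr : X ∈ Tr {F | IsFlat H'' F} := by rw [← hBR'']; exact hX
      obtain ⟨T, hT⟩ := transversal_iff_trAux.mp hXtr
      obtain ⟨T₀, p, hT₀F, hpT₀, hpX, hint, hec, hesub⟩ := trAux_inversion hT hXc
      refine ⟨T₀, ⟨hT₀F, ?_, ?_⟩, by rw [hint]; exact hec⟩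
      · rw [← hec]; exact Finset.card_le_card hesub
      · rintro rfl; exact hpT₀ (Finset.mem_univ p)
    have hZL : ∃ L ∈ 𝓛, (Z ∩ L).card = d := key Z (hHsub hZH) hZc
    obtain ⟨L₀, hL₀, _⟩ := hZL
    refine ⟨𝓛, ⟨L₀, hL₀⟩, fun L hL => ⟨hL.2.1, hL.2.2⟩, ?_⟩
    ext X
    simp only [Set.mem_setOf_eq]
    constructor
    · intro hX
      rcases le_or_gt X.card d with hle | hlt
      · exact ⟨L₀, hL₀, Or.inl hle⟩
      · have hXc : X.card = d + 1 := le_antisymm (hdim X hX) hlt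
        obtain ⟨L, hL, hcap⟩ := key X (hHsub hX) hXc
        exact ⟨L, hL, Or.inr ⟨hXc, hcap⟩⟩
    · rintro ⟨L, hL, hXBd⟩
      rcases hXBd with hle | ⟨hXc, hcap⟩
      · exact hsmallH X hle
      · have hI : X ∩ L ∈ H'' := hHsub (hpav _ hcap)
        have hsd : (X \ L).card = 1 := by
          have := Finset.card_inter_add_card_sdiff X L
          omega
        obtain ⟨p, hpeq⟩ := Finset.card_eq_one.mp hsd
        have hpmem : p ∈ X ∧ p ∉ L := by
          have : p ∈ X \ L := by rw [hpeq]; exact Finset.mem_singleton_self p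
          exact ⟨(Finset.mem_sdiff.mp this).1, (Finset.mem_sdiff.mp this).2⟩
        have hXeq : insert p (X ∩ L) = X := by
          ext a
          simp only [Finset.mem_insert, Finset.mem_inter]
          constructor
          · rintro (rfl | ⟨ha, _⟩)
            · exact hpmem.1
            · exact ha
          · intro ha
            by_cases haL : a ∈ L
            · exact Or.inr ⟨ha, haL⟩
            · left
              have : a ∈ X \ L := Finset.mem_sdiff.mpr ⟨ha, haL⟩
              rw [hpeq] at this
              exact Finset.mem_singleton.mp this
        have hins : insert p (X ∩ L) ∈ H'' :=
          hL.1 (X ∩ L) hI Finset.inter_subset_right p hpmem.2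
        rw [hXeq] at hins
        rw [hHtr]
        exact ⟨hins, by omega⟩
  · -- backward direction
    rintro ⟨𝓛, ⟨L₀, hL₀⟩, h𝓛cond, hHeq⟩
    set Fl : Set (Finset V) := {F | F.card ≤ d - 1} ∪ {Finset.univ} ∪
      {F | ∃ K : Finset (Finset V), K.Nonempty ∧ ↑K ⊆ 𝓛 ∧ F = K.inf id} with hFl
    have hFl_small : ∀ F : Finset V, F.card ≤ d - 1 → F ∈ Fl := fun F hF =>
      Or.inl (Or.inl hF)
    have hFl_univ : Finset.univ ∈ Fl := Or.inl (Or.inr rfl)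
    have hFl_L : ∀ L ∈ 𝓛, L ∈ Fl := by
      intro L hL
      refine Or.inr ⟨{L}, Finset.singleton_nonempty L, by simpa using hL, ?_⟩
      simp
    have hFl_inter : ∀ A ∈ Fl, ∀ B ∈ Fl, A ∩ B ∈ Fl := by
      rintro A hA B hB
      rcases hA with (hA | hA) | hA
      · exact hFl_small _ (le_trans (Finset.card_le_card Finset.inter_subset_left) hA)
      · rw [Set.mem_singleton_iff] at hA
        subst hA
        rw [Finset.univ_inter]
        exact hB
      · rcases hB with (hB | hB) | hB
        · exact hFl_small _ (le_trans (Finset.card_le_card Finset.inter_subset_right) hB)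
        · rw [Set.mem_singleton_iff] at hB
          subst hB
          rw [Finset.inter_univ]
          exact Or.inr hA
        · obtain ⟨K1, hK1ne, hK1sub, rfl⟩ := hA
          obtain ⟨K2, hK2ne, hK2sub, rfl⟩ := hB
          refine Or.inr ⟨K1 ∪ K2, Finset.Nonempty.mono Finset.subset_union_left hK1ne, ?_, ?_⟩
          · intro A hA
            rcases Finset.mem_union.mp hA with h | h
            · exact hK1sub h
            · exact hK2sub h
          · rw [Finset.inf_union]
            rfl
    have hemp : ∅ ∈ Tr Fl :=
      transversal_iff_trAux.mpr ⟨∅, trAux_of_small hFl_small ∅ (by simp)⟩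
    have hbuild_le_d : ∀ X : Finset V, X.card ≤ d → X ∈ Tr Fl := by
      intro X hXc
      rcases le_or_gt X.card (d - 1) with h | h
      · exact transversal_iff_trAux.mpr ⟨X, trAux_of_small hFl_small X h⟩
      · have hne : X.Nonempty := Finset.card_pos.mp (by omega)
        obtain ⟨q, hq⟩ := hne
        have h1 : TrAux Fl (X.erase q) (X.erase q) :=
          trAux_of_small hFl_small _ (by rw [Finset.card_erase_of_mem hq]; omega)
        have h2 := TrAux.step h1 hFl_univ (Finset.subset_univ _) (Finset.mem_univ q)
          (Finset.notMem_erase q X)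
        rw [Finset.insert_erase hq] at h2
        exact transversal_iff_trAux.mpr ⟨_, h2⟩
    have hbuild_face : ∀ (X L : Finset V), L ∈ 𝓛 → X.card = d + 1 → (X ∩ L).card = d →
        X ∈ Tr Fl := by
      intro X L hL hXc hXL
      have hIne : (X ∩ L).Nonempty := Finset.card_pos.mp (by omega)
      obtain ⟨q, hq⟩ := hIne
      have h1 : TrAux Fl ((X ∩ L).erase q) ((X ∩ L).erase q) :=
        trAux_of_small hFl_small _ (by rw [Finset.card_erase_of_mem hq]; omega)
      have h2 : TrAux Fl (X ∩ L) L := by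
        have := TrAux.step h1 (hFl_L L hL)
          ((Finset.erase_subset q (X ∩ L)).trans Finset.inter_subset_right)
          ((Finset.mem_inter.mp hq).2) (Finset.notMem_erase q (X ∩ L))
        rwa [Finset.insert_erase hq] at this
      have hsd : (X \ L).card = 1 := by
        have := Finset.card_inter_add_card_sdiff X L
        omega
      obtain ⟨p, hpeq⟩ := Finset.card_eq_one.mp hsd
      have hpmem : p ∈ X ∧ p ∉ L := by
        have : p ∈ X \ L := by rw [hpeq]; exact Finset.mem_singleton_self p
        exact ⟨(Finset.mem_sdiff.mp this).1, (Finset.mem_sdiff.mp this).2⟩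
      have h3 := TrAux.step h2 hFl_univ (Finset.subset_univ _) (Finset.mem_univ p) hpmem.2
      have hXeq : insert p (X ∩ L) = X := by
        ext a
        simp only [Finset.mem_insert, Finset.mem_inter]
        constructor
        · rintro (rfl | ⟨ha, _⟩)
          · exact hpmem.1
          · exact ha
        · intro ha
          by_cases haL : a ∈ L
          · exact Or.inr ⟨ha, haL⟩
          · left
            have : a ∈ X \ L := Finset.mem_sdiff.mpr ⟨ha, haL⟩
            rw [hpeq] at this
            exact Finset.mem_singleton.mp this
      rw [hXeq] at h3
      exact transversal_iff_trAux.mpr ⟨_, h3⟩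
    refine ⟨Tr Fl, d + 1, by omega, ⟨?_, ?_⟩, ?_, ?_⟩
    · -- singletons
      intro v
      exact hbuild_le_d {v} (by simp; omega)
    · -- downward closed
      exact fun X hX Y hY => tr_downward hX hY
    · -- boolean representable
      apply Set.Subset.antisymm
      · exact tr_mono (fun F hF => mem_flat_of_tr hFl_inter hFl_univ hF)
      · intro X hX
        obtain ⟨T, hT⟩ := transversal_iff_trAux.mp hX
        exact trAux_flats_mem hemp hT
    · -- truncation
      ext X
      simp only [trunc, Set.mem_setOf_eq]
      constructor
      · intro hX
        have hXle := hdim X hX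
        refine ⟨?_, hXle⟩
        rcases le_or_gt X.card d with hle | hlt
        · exact hbuild_le_d X hle
        · have hXc : X.card = d + 1 := by omega
          have : X ∈ {X : Finset V | ∃ L ∈ 𝓛, X ∈ Bd d L} := hHeq ▸ hX
          obtain ⟨L, hL, hXBd⟩ := this
          rcases hXBd with hle' | ⟨_, hcap⟩
          · have : X.card ≤ d := hle'
            omega
          · exact hbuild_face X L hL hXc hcap
      · rintro ⟨hXtr, hXle⟩
        rcases le_or_gt X.card d with hle | hlt
        · exact hsmallH X hle
        · have hXc : X.card = d + 1 := by omega
          obtain ⟨T, hT⟩ := transversal_iff_trAux.mp hXtr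
          obtain ⟨T₀, p, hT₀F, hpT₀, hpX, hint, hec, hesub⟩ := trAux_inversion hT hXc
          have hT₀card : d ≤ T₀.card := by
            rw [← hec]; exact Finset.card_le_card hesub
          rcases hT₀F with (hsmall | huniv) | ⟨K, hKne, hKsub, rfl⟩
          · have : T₀.card ≤ d - 1 := hsmall
            omega
          · rw [Set.mem_singleton_iff] at huniv
            subst huniv
            exact absurd (Finset.mem_univ p) hpT₀
          · have hcap : (X ∩ K.inf id).card = d := by rw [hint]; exact hec
            obtain ⟨L, hL, hXL⟩ := inter_card_lemma hXc 𝓛 K hKne hKsub hcap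
            have : X ∈ {X : Finset V | ∃ L' ∈ 𝓛, X ∈ Bd d L'} :=
              ⟨L, hL, Or.inr ⟨hXc, hXL⟩⟩
            rw [hHeq]
            exact this
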